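/- arXiv:2307.07308 — 3 statements merged into one kernel-verified Lean document; each statement's English description precedes it below -/
import Mathlib

section
/- Let G be the graph obtained from the complete bipartite graph K_{d,d} by removing a perfect matching and adding two new vertices u, v, where u is joined to all d vertices of the first part and v is joined to all d vertices of the second part. Then G is d-regular on 2d+2 vertices, and its adjacency spectrum is ±d (each once) and ±1 (each with multiplicity d); consequently its algebraic connectivity is d − 1. -/
open Matrix BigOperators

/-- The algebraic connectivity of a finite simple graph: the second-smallest eigenvalue of
its Laplacian, characterized as the infimum of Rayleigh quotients of the Laplacian over
nonzero vectors orthogonal to the all-ones vector. -/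
noncomputable def algebraicConnectivity {V : Type*} [Fintype V] [DecidableEq V]
    (G : SimpleGraph V) : ℝ :=
  letI := Classical.decRel G.Adj
  sInf {r : ℝ | ∃ x : V → ℝ, x ≠ 0 ∧ (∑ v, x v) = 0 ∧
    r = (x ⬝ᵥ (G.lapMatrix ℝ).mulVec x) / (x ⬝ᵥ x)}


open Polynomial

/-- `K_{d,d}` minus a perfect matching, plus two apex vertices: the first apex `.inr 0` is
joined to all vertices of the first part and the second apex `.inr 1` to all of the second. -/
def modifiedBipartite (d : ℕ) : SimpleGraph ((Fin d ⊕ Fin d) ⊕ Fin 2) :=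
  SimpleGraph.fromRel fun x y =>
    match x, y with
    | .inl (.inl i), .inl (.inr j) => (i : ℕ) ≠ (j : ℕ)
    | .inl (.inl _), .inr u => u = 0
    | .inl (.inr _), .inr u => u = 1
    | _, _ => False

/-- The adjacency matrix of the modified bipartite graph. -/
noncomputable def modifiedBipartiteAdj (d : ℕ) :
    Matrix ((Fin d ⊕ Fin d) ⊕ Fin 2) ((Fin d ⊕ Fin d) ⊕ Fin 2) ℝ :=
  letI := Classical.decRel (modifiedBipartite d).Adj
  (modifiedBipartite d).adjMatrix ℝ

/-! ### Auxiliary definitions and lemmas -/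

abbrev MBV (d : ℕ) := (Fin d ⊕ Fin d) ⊕ Fin 2

/-- Explicit form of the adjacency matrix. -/
def Aexp (d : ℕ) : Matrix (MBV d) (MBV d) ℝ :=
  fun x y => match x, y with
  | .inl (.inl i), .inl (.inr j) => if i = j then 0 else 1
  | .inl (.inr i), .inl (.inl j) => if i = j then 0 else 1
  | .inl (.inl _), .inr u => if u = 0 then 1 else 0
  | .inr u, .inl (.inl _) => if u = 0 then 1 else 0
  | .inl (.inr _), .inr u => if u = 1 then 1 else 0
  | .inr u, .inl (.inr _) => if u = 1 then 1 else 0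
  | _, _ => 0

/-- Matrix of (column) eigenvectors. -/
def Pm (d : ℕ) : Matrix (MBV d) (MBV d) ℝ :=
  fun w k => match w, k with
  | .inl (.inl i), .inl (.inl j) => if i = j then -1 else 0
  | .inl (.inl i), .inl (.inr j) => if i = j then 1 else 0
  | .inl (.inl _), .inr _ => 1
  | .inl (.inr i), .inl (.inl j) => if i = j then 1 else 0
  | .inl (.inr i), .inl (.inr j) => if i = j then 1 else 0
  | .inl (.inr _), .inr u => if u = 0 then 1 else -1
  | .inr u, .inl (.inl _) => if u = 0 then -1 else 1
  | .inr _, .inl (.inr _) => -1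
  | .inr u, .inr w => if w = 0 then 1 else if u = 0 then -1 else 1

/-- `(2d+2)` times the inverse of `Pm`. -/
def Mm (d : ℕ) : Matrix (MBV d) (MBV d) ℝ :=
  fun r c => match r, c with
  | .inl (.inl j), .inl (.inl i) => if j = i then -(d:ℝ) else 1
  | .inl (.inl j), .inl (.inr i) => if j = i then (d:ℝ) else -1
  | .inl (.inl _), .inr u => if u = 0 then -1 else 1
  | .inl (.inr j), .inl (.inl i) => if j = i then (d:ℝ) else -1
  | .inl (.inr j), .inl (.inr i) => if j = i then (d:ℝ) else -1
  | .inl (.inr _), .inr _ => -1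
  | .inr _, .inl (.inl _) => 1
  | .inr u, .inl (.inr _) => if u = 0 then 1 else -1
  | .inr u, .inr w => if u = 0 then 1 else if w = 0 then -1 else 1

/-- The eigenvalues. -/
def dvec (d : ℕ) : MBV d → ℝ :=
  fun k => match k with
  | .inl (.inl _) => 1
  | .inl (.inr _) => -1
  | .inr u => if u = 0 then (d:ℝ) else -(d:ℝ)

lemma sum_MBV {d : ℕ} {M : Type*} [AddCommMonoid M] (f : MBV d → M) :
    ∑ x, f x = ((∑ j, f (.inl (.inl j))) + ∑ j, f (.inl (.inr j))) + (f (.inr 0) + f (.inr 1)) := by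
  rw [Fintype.sum_sum_type, Fintype.sum_sum_type, Fin.sum_univ_two]

lemma sum_mul_ite {n : ℕ} (i j : Fin n) (a b c e : ℝ) :
    ∑ x : Fin n, (if i = x then a else b) * (if x = j then c else e) =
      (n:ℝ)*(b*e) + (a-b)*e + b*(c-e) + (if i = j then (a-b)*(c-e) else 0) := by
  have h : ∀ x : Fin n, (if i = x then a else b) * (if x = j then c else e)
      = b*e + ((if i = x then (a-b)*e else 0) + ((if x = j then b*(c-e) else 0)
        + (if i = x then (if x = j then (a-b)*(c-e) else 0) else 0))) := by
    intro x; split_ifs <;> ring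
  rw [Finset.sum_congr rfl fun x _ => h x]
  simp [Finset.sum_add_distrib, Finset.sum_ite_eq, Finset.sum_ite_eq', Finset.card_univ,
    mul_comm]
  try ring

lemma sum_ite_r {n : ℕ} (j : Fin n) (c e : ℝ) :
    ∑ x : Fin n, (if x = j then c else e) = (n:ℝ)*e + (c - e) := by
  have h : ∀ x : Fin n, (if x = j then c else e) = e + (if x = j then c - e else 0) := by
    intro x; split_ifs <;> ring
  rw [Finset.sum_congr rfl fun x _ => h x]
  simp [Finset.sum_add_distrib, Finset.sum_ite_eq']
  try ring

lemma sum_ite_l {n : ℕ} (i : Fin n) (c e : ℝ) :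
    ∑ x : Fin n, (if i = x then c else e) = (n:ℝ)*e + (c - e) := by
  have h : ∀ x : Fin n, (if i = x then c else e) = e + (if i = x then c - e else 0) := by
    intro x; split_ifs <;> ring
  rw [Finset.sum_congr rfl fun x _ => h x]
  simp [Finset.sum_add_distrib, Finset.sum_ite_eq]
  try ring

lemma adjMatrix_eq (d : ℕ) [inst : DecidableRel (modifiedBipartite d).Adj] :
    (modifiedBipartite d).adjMatrix ℝ = Aexp d := by
  ext x y
  rw [SimpleGraph.adjMatrix_apply]
  rcases x with (i|i)|u <;> rcases y with (j|j)|w <;>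
    · simp only [modifiedBipartite, SimpleGraph.fromRel_adj, Aexp, ne_eq, Fin.val_eq_val]
      split_ifs with h <;> simp_all

lemma hPM (d : ℕ) : Pm d * Mm d = ((2*(d:ℝ)+2)) • 1 := by
  ext w k
  rw [mul_apply, sum_MBV]
  rcases w with (i|i)|u <;> rcases k with (j|j)|w' <;>
    [skip; skip; fin_cases w'; skip; skip; fin_cases w'; fin_cases u; fin_cases u;
     (fin_cases u <;> fin_cases w')] <;>
    simp only [Pm, Mm, Matrix.smul_apply, one_apply, Fin.mk_zero, Fin.mk_one, Fin.isValue,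
      reduceCtorEq, Sum.inl.injEq, Sum.inr.injEq, one_ne_zero, zero_ne_one, if_false, if_true,
      reduceIte] <;>
    (try simp only [sum_mul_ite]) <;>
    simp only [mul_ite, ite_mul, neg_mul, one_mul, mul_one, zero_mul, mul_zero, mul_neg,
      neg_neg, sum_ite_l, sum_ite_r, Finset.sum_ite_eq, Finset.sum_ite_eq', Finset.mem_univ,
      if_true, Finset.sum_const, Finset.card_univ, Fintype.card_fin, nsmul_eq_mul,
      smul_eq_mul, Finset.sum_neg_distrib] <;>
    first
      | (split_ifs <;> push_cast <;> ring)
      | (push_cast; try ring)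

lemma hAP (d : ℕ) : Aexp d * Pm d = Pm d * Matrix.diagonal (dvec d) := by
  ext w k
  rw [mul_apply, mul_apply, sum_MBV, sum_MBV]
  rcases w with (i|i)|u <;> rcases k with (j|j)|w' <;>
    [skip; skip; fin_cases w'; skip; skip; fin_cases w'; fin_cases u; fin_cases u;
     (fin_cases u <;> fin_cases w')] <;>
    simp only [Pm, Aexp, dvec, Matrix.diagonal, Matrix.of_apply, Fin.mk_zero, Fin.mk_one,
      Fin.isValue, reduceCtorEq, Sum.inl.injEq, Sum.inr.injEq, one_ne_zero, zero_ne_one,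
      if_false, if_true, reduceIte] <;>
    (try simp only [sum_mul_ite]) <;>
    simp only [mul_ite, ite_mul, neg_mul, one_mul, mul_one, zero_mul, mul_zero, mul_neg,
      neg_neg, sum_ite_l, sum_ite_r, Finset.sum_ite_eq, Finset.sum_ite_eq', Finset.mem_univ,
      if_true, Finset.sum_const, Finset.card_univ, Fintype.card_fin, nsmul_eq_mul,
      smul_eq_mul, Finset.sum_neg_distrib] <;>
    first
      | (split_ifs <;> push_cast <;> ring)
      | (push_cast; try ring)

section conj
variable {n R : Type*} [Fintype n] [DecidableEq n] [CommRing R]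

lemma charpoly_of_conj (P N A D : Matrix n n R) (h1 : P * N = 1) (h2 : A * P = P * D) :
    A.charpoly = D.charpoly := by
  have hA : A = P * D * N := by
    calc A = A * (P * N) := by rw [h1, mul_one]
    _ = (A * P) * N := by rw [mul_assoc]
    _ = P * D * N := by rw [h2]
  have hmap : ∀ (X Y : Matrix n n R),
      (X * Y).map (C : R →+* R[X]) = X.map C * Y.map C := fun X Y => Matrix.map_mul
  have key : charmatrix A = P.map (C : R →+* R[X]) * charmatrix D * N.map C := by
    rw [charmatrix, charmatrix]
    have hc : P.map (C : R →+* R[X]) * Matrix.scalar n (X : R[X]) =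
        Matrix.scalar n (X : R[X]) * P.map C :=
      (Matrix.scalar_commute (X : R[X]) (fun r => Commute.all _ _) _).symm
    rw [Matrix.mul_sub, Matrix.sub_mul]
    rw [RingHom.mapMatrix_apply, RingHom.mapMatrix_apply, hc]
    rw [mul_assoc, ← hmap, h1, Matrix.map_one _ (map_zero C) (map_one C), mul_one,
      ← hmap, ← hmap, ← hA]
  rw [Matrix.charpoly, Matrix.charpoly, key, det_mul, det_mul]
  have h3 : (P.map (C : R →+* R[X])).det * (N.map C).det = 1 := by
    rw [← det_mul, ← hmap, h1, Matrix.map_one _ (map_zero C) (map_one C), det_one]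
  calc (P.map (C : R →+* R[X])).det * (charmatrix D).det * (N.map C).det
      = (charmatrix D).det * ((P.map (C : R →+* R[X])).det * (N.map C).det) := by ring
    _ = (charmatrix D).det := by rw [h3, mul_one]

lemma charpoly_diagonal (v : n → R) :
    (Matrix.diagonal v).charpoly = ∏ i, (X - C (v i)) := by
  rw [Matrix.charpoly]
  have h : charmatrix (Matrix.diagonal v) = Matrix.diagonal fun i => (X : R[X]) - C (v i) := by
    ext i j
    by_cases h : i = j
    · subst h; simp
    · rw [charmatrix_apply_ne _ _ _ h, Matrix.diagonal_apply_ne _ h, Matrix.diagonal_apply_ne _ h,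
        map_zero, neg_zero]
  rw [h, det_diagonal]
end conj

lemma charpoly_Aexp (d : ℕ) :
    (Aexp d).charpoly = (X - C (d : ℝ)) * (X + C (d : ℝ)) * (X - 1) ^ d * (X + 1) ^ d := by
  have hc : (2*(d:ℝ)+2) ≠ 0 := by positivity
  have h1 : Pm d * ((2*(d:ℝ)+2)⁻¹ • Mm d) = 1 := by
    rw [Matrix.mul_smul, hPM, smul_smul, inv_mul_cancel₀ hc, one_smul]
  rw [charpoly_of_conj (Pm d) ((2*(d:ℝ)+2)⁻¹ • Mm d) (Aexp d) (Matrix.diagonal (dvec d)) h1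
    (hAP d), _root_.charpoly_diagonal]
  rw [show (∏ i : MBV d, (X - C (dvec d i)))
      = ((∏ j : Fin d, (X - C (dvec d (.inl (.inl j))))) *
          ∏ j : Fin d, (X - C (dvec d (.inl (.inr j))))) *
        ((X - C (dvec d (.inr 0))) * (X - C (dvec d (.inr 1)))) by
    rw [Fintype.prod_sum_type, Fintype.prod_sum_type, Fin.prod_univ_two]]
  simp only [dvec, Fin.isValue, one_ne_zero, if_false, if_true, reduceIte, Polynomial.C_1,
    map_neg, Finset.prod_const, Finset.card_univ, Fintype.card_fin]
  ring

lemma rowsum_Aexp (d : ℕ) (v : MBV d) : ∑ x, Aexp d v x = (d : ℝ) := by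
  rw [sum_MBV]
  rcases v with (i|i)|u <;> [skip; skip; fin_cases u] <;>
    simp only [Aexp, Fin.mk_zero, Fin.mk_one, Fin.isValue, one_ne_zero, zero_ne_one,
      if_false, if_true, reduceIte, sum_ite_l, Finset.sum_const, Finset.card_univ,
      Fintype.card_fin, nsmul_eq_mul, mul_one, mul_zero] <;>
    ring

lemma degree_eq (d : ℕ) [inst : DecidableRel (modifiedBipartite d).Adj] (v : MBV d) :
    (modifiedBipartite d).degree v = d := by
  have h := SimpleGraph.adjMatrix_mulVec_const_apply (α := ℝ) (G := modifiedBipartite d)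
    (a := 1) (v := v)
  rw [adjMatrix_eq] at h
  have h2 : (Aexp d *ᵥ Function.const (MBV d) (1:ℝ)) v = (d:ℝ) := by
    rw [Matrix.mulVec]
    simp only [dotProduct, Function.const_apply, mul_one]
    exact rowsum_Aexp d v
  rw [h2] at h
  have h3 : ((modifiedBipartite d).degree v : ℝ) = (d:ℝ) := by rw [h]; ring
  exact_mod_cast h3

lemma lap_eq (d : ℕ) [inst : DecidableRel (modifiedBipartite d).Adj] :
    (modifiedBipartite d).lapMatrix ℝ = (d:ℝ) • (1 : Matrix (MBV d) (MBV d) ℝ) - Aexp d := by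
  rw [SimpleGraph.lapMatrix, adjMatrix_eq]
  congr 1
  rw [SimpleGraph.degMatrix,
    show (fun v => (((modifiedBipartite d).degree v : ℕ) : ℝ)) = fun _ => (d:ℝ) from
      funext fun v => by rw [degree_eq],
    Matrix.smul_one_eq_diagonal]

lemma sum_ite01 {n : ℕ} (i : Fin n) (f : Fin n → ℝ) :
    ∑ j, (if i = j then (0:ℝ) else 1) * f j = (∑ j, f j) - f i := by
  have h : ∀ j, (if i = j then (0:ℝ) else 1) * f j = f j - (if i = j then f j else 0) := by
    intro j; split_ifs <;> ring
  rw [Finset.sum_congr rfl fun j _ => h j, Finset.sum_sub_distrib]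
  simp [Finset.sum_ite_eq]

lemma sum_shift {d : ℕ} (f g : Fin d → ℝ) (c : ℝ) :
    ∑ i, f i * ((∑ j, g j) - g i + c)
      = (∑ i, f i) * (∑ j, g j) - (∑ i, f i * g i) + c * (∑ i, f i) := by
  rw [Finset.sum_congr rfl (fun i _ => by ring :
    ∀ i ∈ Finset.univ, f i * ((∑ j, g j) - g i + c)
      = f i * (∑ j, g j) - f i * g i + f i * c)]
  rw [Finset.sum_add_distrib, Finset.sum_sub_distrib, ← Finset.sum_mul, ← Finset.sum_mul]
  ring

lemma quad_aux (d S T u v p W A2 B2 : ℝ) (hd2 : 0 ≤ d - 2)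
    (hsum0 : S + T + u + v = 0) (hW : W = A2 + 2*p + B2)
    (hCS : (S + T)^2 ≤ d * W) :
    2*S*T - 2*p + 2*u*S + 2*v*T ≤ A2 + B2 + u*u + v*v := by
  have hv : v = -(S+T+u) := by linarith
  subst hv
  have hd0 : (0:ℝ) < d := by linarith
  have key : d * ((A2 + B2 + u*u + (-(S+T+u))*(-(S+T+u)))
      - (2*S*T - 2*p + 2*u*S + 2*(-(S+T+u))*T))
      = (d*W - (S+T)^2) + 2*d*(u+T)^2 + (d+1)*(S+T)^2 := by
    rw [hW]; ring
  have h0 : 0 ≤ d * ((A2 + B2 + u*u + (-(S+T+u))*(-(S+T+u)))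
      - (2*S*T - 2*p + 2*u*S + 2*(-(S+T+u))*T)) := by
    rw [key]
    have h1 := mul_nonneg (le_of_lt hd0) (sq_nonneg (u+T))
    nlinarith [hCS, sq_nonneg (u+T), sq_nonneg (S+T)]
  nlinarith [h0, hd0]

lemma quad_bound (d : ℕ) (hd : 2 ≤ d) (y : MBV d → ℝ) (hy0 : (∑ v, y v) = 0) :
    y ⬝ᵥ (Aexp d *ᵥ y) ≤ y ⬝ᵥ y := by
  have hsum0 : (∑ i, y (.inl (.inl i))) + (∑ i, y (.inl (.inr i)))
      + y (.inr 0) + y (.inr 1) = 0 := by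
    rw [sum_MBV] at hy0; linarith [hy0]
  have hrow1 : ∀ i, (Aexp d *ᵥ y) (.inl (.inl i))
      = (∑ j, y (.inl (.inr j))) - y (.inl (.inr i)) + y (.inr 0) := by
    intro i
    rw [Matrix.mulVec, dotProduct, sum_MBV]
    simp only [Aexp, Fin.isValue, one_ne_zero, if_false, if_true, reduceIte, zero_mul,
      one_mul, Finset.sum_const_zero, sum_ite01, (by decide : (0:Fin 2) ≠ 1),
      (by decide : ¬(0:Fin 2) = 1), (by decide : ¬(1:Fin 2) = 0)]
    ring
  have hrow2 : ∀ i, (Aexp d *ᵥ y) (.inl (.inr i))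
      = (∑ j, y (.inl (.inl j))) - y (.inl (.inl i)) + y (.inr 1) := by
    intro i
    rw [Matrix.mulVec, dotProduct, sum_MBV]
    simp only [Aexp, Fin.isValue, one_ne_zero, if_false, if_true, reduceIte, zero_mul,
      one_mul, Finset.sum_const_zero, sum_ite01, (by decide : ¬(0:Fin 2) = 1),
      (by decide : ¬(1:Fin 2) = 0)]
    ring
  have hrow3 : (Aexp d *ᵥ y) (.inr 0) = ∑ j, y (.inl (.inl j)) := by
    rw [Matrix.mulVec, dotProduct, sum_MBV]
    simp [Aexp]
  have hrow4 : (Aexp d *ᵥ y) (.inr 1) = ∑ j, y (.inl (.inr j)) := by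
    rw [Matrix.mulVec, dotProduct, sum_MBV]
    simp [Aexp]
  have hquad : y ⬝ᵥ (Aexp d *ᵥ y) =
      2*(∑ i, y (.inl (.inl i)))*(∑ i, y (.inl (.inr i)))
        - 2*(∑ i, y (.inl (.inl i)) * y (.inl (.inr i)))
        + 2*(y (.inr 0))*(∑ i, y (.inl (.inl i)))
        + 2*(y (.inr 1))*(∑ i, y (.inl (.inr i))) := by
    rw [dotProduct, sum_MBV]
    simp only [hrow1, hrow2, hrow3, hrow4, sum_shift]
    rw [show (∑ i, y (.inl (.inr i)) * y (.inl (.inl i)))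
        = ∑ i, y (.inl (.inl i)) * y (.inl (.inr i)) by
      congr 1; funext i; ring]
    ring
  have hself : y ⬝ᵥ y = (∑ i, y (.inl (.inl i)) * y (.inl (.inl i)))
      + (∑ i, y (.inl (.inr i)) * y (.inl (.inr i)))
      + y (.inr 0) * y (.inr 0) + y (.inr 1) * y (.inr 1) := by
    rw [dotProduct, sum_MBV]; ring
  have hW : ∑ i, (y (.inl (.inl i)) + y (.inl (.inr i)))^2
      = (∑ i, y (.inl (.inl i)) * y (.inl (.inl i)))
        + 2*(∑ i, y (.inl (.inl i)) * y (.inl (.inr i)))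
        + (∑ i, y (.inl (.inr i)) * y (.inl (.inr i))) := by
    rw [Finset.sum_congr rfl (fun i _ => by ring :
      ∀ i ∈ Finset.univ, (y (.inl (.inl i)) + y (.inl (.inr i)))^2
        = y (.inl (.inl i)) * y (.inl (.inl i)) + 2*(y (.inl (.inl i)) * y (.inl (.inr i)))
          + y (.inl (.inr i)) * y (.inl (.inr i)))]
    rw [Finset.sum_add_distrib, Finset.sum_add_distrib, ← Finset.mul_sum]
  have hCS : ((∑ i, y (.inl (.inl i))) + (∑ i, y (.inl (.inr i))))^2
      ≤ (d:ℝ) * ∑ i, (y (.inl (.inl i)) + y (.inl (.inr i)))^2 := by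
    have h := sq_sum_le_card_mul_sum_sq (s := (Finset.univ : Finset (Fin d)))
      (f := fun i => y (.inl (.inl i)) + y (.inl (.inr i)))
    rw [Finset.sum_add_distrib] at h
    simpa [Finset.card_univ] using h
  have hd2 : (0:ℝ) ≤ (d:ℝ) - 2 := by
    have h2 : (2:ℝ) ≤ (d:ℝ) := by exact_mod_cast hd
    linarith
  rw [hquad, hself]
  exact quad_aux (d:ℝ) _ _ _ _ _ _ _ _ hd2 hsum0 hW hCS

theorem modifiedBipartite_spectrum (d : ℕ) (hd : 2 ≤ d) :
    (∀ v, {w | (modifiedBipartite d).Adj v w}.ncard = d) ∧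
    Nat.card ((Fin d ⊕ Fin d) ⊕ Fin 2) = 2 * d + 2 ∧
    (modifiedBipartiteAdj d).charpoly =
      (X - C (d : ℝ)) * (X + C (d : ℝ)) * (X - 1) ^ d * (X + 1) ^ d ∧
    algebraicConnectivity (modifiedBipartite d) = d - 1 := by
  classical
  refine ⟨?_, ?_, ?_, ?_⟩
  · intro v
    have h1 : {w | (modifiedBipartite d).Adj v w} = (modifiedBipartite d).neighborSet v := rfl
    rw [h1, ← Nat.card_coe_set_eq, Nat.card_eq_fintype_card]
    rw [SimpleGraph.card_neighborSet_eq_degree, degree_eq]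
  · simp [Nat.card_eq_fintype_card]
    omega
  · rw [show modifiedBipartiteAdj d = Aexp d from adjMatrix_eq d]
    exact charpoly_Aexp d
  · have h0 : 0 < d := by omega
    unfold algebraicConnectivity
    set Sset := {r : ℝ | ∃ x : MBV d → ℝ, x ≠ 0 ∧ (∑ v, x v) = 0 ∧
      r = (x ⬝ᵥ ((modifiedBipartite d).lapMatrix ℝ).mulVec x) / (x ⬝ᵥ x)} with hSset
    have key : ∀ x : MBV d → ℝ, x ≠ 0 →
        x ⬝ᵥ ((modifiedBipartite d).lapMatrix ℝ).mulVec x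
          = (d:ℝ) * (x ⬝ᵥ x) - x ⬝ᵥ (Aexp d *ᵥ x) := by
      intro x hx
      rw [lap_eq d, Matrix.sub_mulVec, dotProduct_sub, Matrix.smul_mulVec,
        Matrix.one_mulVec, dotProduct_smul, smul_eq_mul]
    have hposd : ∀ x : MBV d → ℝ, x ≠ 0 → 0 < x ⬝ᵥ x := by
      intro x hx
      have h1 : x ⬝ᵥ x ≠ 0 := fun h => hx ((dotProduct_self_eq_zero).mp h)
      have h2 : 0 ≤ x ⬝ᵥ x := by
        rw [dotProduct]
        exact Finset.sum_nonneg fun i _ => mul_self_nonneg _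
      exact lt_of_le_of_ne h2 (Ne.symm h1)
    have hlb : ∀ r ∈ Sset, (d:ℝ) - 1 ≤ r := by
      rintro r ⟨x, hx, hx0, rfl⟩
      rw [key x hx, le_div_iff₀ (hposd x hx)]
      have := quad_bound d hd x hx0
      nlinarith [this, hposd x hx]
    have hmem : (d:ℝ) - 1 ∈ Sset := by
      set x : MBV d → ℝ := fun w => Pm d w (.inl (.inl ⟨0, h0⟩)) with hx
      have hxne : x ≠ 0 := by
        intro h
        have := congrFun h (.inr 1)
        simp [hx, Pm] at this
      have hxsum : (∑ v, x v) = 0 := by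
        rw [sum_MBV]
        simp [hx, Pm, Finset.sum_ite_eq', Finset.sum_ite_eq]
      have hAx : Aexp d *ᵥ x = x := by
        funext w
        have := congrFun (congrFun (hAP d) w) (.inl (.inl ⟨0, h0⟩))
        rw [mul_apply, mul_apply] at this
        have h2 : (Aexp d *ᵥ x) w = ∑ j, Aexp d w j * Pm d j (.inl (.inl ⟨0, h0⟩)) := rfl
        rw [h2, this]
        have h3 : ∀ j, Pm d w j * Matrix.diagonal (dvec d) j (.inl (.inl ⟨0, h0⟩))
            = if j = .inl (.inl ⟨0, h0⟩) then Pm d w j else 0 := by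
          intro j
          by_cases hj : j = (Sum.inl (Sum.inl ⟨0, h0⟩) : MBV d)
          · subst hj; simp [dvec, Matrix.diagonal_apply_eq]
          · simp [Matrix.diagonal_apply_ne _ hj, hj]
        rw [Finset.sum_congr rfl fun j _ => h3 j, Finset.sum_ite_eq']
        simp [hx]
      refine ⟨x, hxne, hxsum, ?_⟩
      rw [key x hxne, hAx]
      have hxx := hposd x hxne
      field_simp
    exact le_antisymm (csInf_le ⟨(d:ℝ)-1, hlb⟩ hmem) (le_csInf ⟨_, hmem⟩ hlb)
end

section
/- Let d ≥ 3 and K ≥ 2, and let θ ∈ (0, π) be the smallest positive root of tan(θK) = −(d/(d−2))·tan(θ). Then π/(2K) < θ < π/K. -/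
open Real Set Filter Topology

set_option maxHeartbeats 1000000 in
theorem even_diameter_theta_bounds (d K : ℕ) (hd : 3 ≤ d) (hK : 2 ≤ K) (θ : ℝ)
    (hθ : θ ∈ Set.Ioo 0 π)
    (hroot : Real.tan (θ * K) = -((d : ℝ) / ((d : ℝ) - 2)) * Real.tan θ)
    (hmin : ∀ θ' : ℝ, 0 < θ' →
      Real.tan (θ' * K) = -((d : ℝ) / ((d : ℝ) - 2)) * Real.tan θ' → θ ≤ θ') :
    π / (2 * K) < θ ∧ θ < π / K := by
  have hKr : (2 : ℝ) ≤ (K : ℝ) := by exact_mod_cast hK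
  have hKpos : (0 : ℝ) < (K : ℝ) := by linarith
  have hπ := Real.pi_pos
  set c : ℝ := (d : ℝ) / ((d : ℝ) - 2) with hc_def
  have hd2 : (0 : ℝ) < (d : ℝ) - 2 := by
    have : (3 : ℝ) ≤ (d : ℝ) := by exact_mod_cast hd
    linarith
  have hc : 0 < c := div_pos (by linarith) hd2
  set p : ℝ := π / (2 * K) with hp_def
  set q : ℝ := π / K with hq_def
  have hppos : 0 < p := div_pos hπ (by linarith)
  have hpq : p < q := by
    rw [hp_def, hq_def, div_lt_div_iff₀ (by linarith) hKpos]
    nlinarith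
  have hqle : q ≤ π / 2 := by
    rw [hq_def, div_le_div_iff₀ hKpos (by norm_num)]
    nlinarith
  -- lower bound
  have hlow : p < θ := by
    by_contra hle
    push_neg at hle
    have hθlt : θ < π / 2 := by linarith
    have htanθ : 0 < Real.tan θ := Real.tan_pos_of_pos_of_lt_pi_div_two hθ.1 hθlt
    have hrhs : -c * Real.tan θ < 0 := by nlinarith
    have hθK : θ * K ≤ π / 2 := by
      have := mul_le_mul_of_nonneg_right hle (le_of_lt hKpos)
      rw [hp_def] at this
      calc θ * K ≤ π / (2 * K) * K := this
        _ = π / 2 := by field_simp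
    rcases lt_or_eq_of_le hθK with h | h
    · have : 0 < Real.tan (θ * K) :=
        Real.tan_pos_of_pos_of_lt_pi_div_two (mul_pos hθ.1 hKpos) h
      rw [hroot] at this; linarith
    · rw [h, Real.tan_pi_div_two] at hroot; linarith
  refine ⟨hlow, ?_⟩
  -- upper bound: find a root in (p, q)
  set f : ℝ → ℝ := fun t => Real.tan (t * K) + c * Real.tan t with hf_def
  -- f tends to -∞ at p from the right
  have hmapP : Tendsto (fun t : ℝ => t * K) (𝓝[>] p) (𝓝[>] (π / 2)) := by
    apply tendsto_nhdsWithin_of_tendsto_nhds_of_eventually_within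
    · have : Continuous (fun t : ℝ => t * K) := by continuity
      have := this.tendsto p
      rw [show p * (K : ℝ) = π / 2 by rw [hp_def]; field_simp] at this
      exact this.mono_left nhdsWithin_le_nhds
    · filter_upwards [self_mem_nhdsWithin] with t ht
      have : p < t := ht
      calc π / 2 = p * K := by rw [hp_def]; field_simp
        _ < t * K := by exact mul_lt_mul_of_pos_right this hKpos
  have htan_top : Tendsto Real.tan (𝓝[>] (π / 2)) atBot := by
    have hshift : Tendsto (fun x : ℝ => x - π) (𝓝[>] (π / 2)) (𝓝[>] (-(π / 2))) := by
      apply tendsto_nhdsWithin_of_tendsto_nhds_of_eventually_within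
      · have : Tendsto (fun x : ℝ => x - π) (𝓝 (π / 2)) (𝓝 (π / 2 - π)) :=
          (continuous_id.sub continuous_const).tendsto _
        rw [show π / 2 - π = -(π / 2) by ring] at this
        exact this.mono_left nhdsWithin_le_nhds
      · filter_upwards [self_mem_nhdsWithin] with x hx
        have : π / 2 < x := hx
        simp only [Set.mem_Ioi]; linarith
    have := Real.tendsto_tan_neg_pi_div_two.comp hshift
    exact this.congr fun x => by simp [Function.comp, Real.tan_sub_pi]
  have hfa : Tendsto f (𝓝[>] p) atBot := by
    have h1 : Tendsto (fun t => Real.tan (t * K)) (𝓝[>] p) atBot :=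
      htan_top.comp hmapP
    have h2 : Tendsto (fun t => c * Real.tan t) (𝓝[>] p) (𝓝 (c * Real.tan p)) := by
      have hcos : Real.cos p ≠ 0 := by
        have : 0 < Real.cos p := Real.cos_pos_of_mem_Ioo ⟨by linarith, by linarith⟩
        linarith
      have : ContinuousAt Real.tan p := Real.continuousAt_tan.2 hcos
      exact (tendsto_const_nhds.mul this.tendsto).mono_left nhdsWithin_le_nhds
    exact h1.atBot_add h2
  -- there is a ∈ Ioo p q with f a < 0
  have hIoo_p : Ioo p q ∈ 𝓝[>] p := Ioo_mem_nhdsGT_of_mem ⟨le_rfl, hpq⟩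
  obtain ⟨a, haneg, haI⟩ := ((hfa.eventually (eventually_lt_atBot 0)).and
    (eventually_of_mem hIoo_p fun t ht => ht)).exists
  -- f is eventually positive near q from the left
  have htanp : 0 < Real.tan p :=
    Real.tan_pos_of_pos_of_lt_pi_div_two hppos (by linarith)
  have hmapQ : Tendsto (fun t : ℝ => Real.tan (t * K)) (𝓝[<] q) (𝓝 0) := by
    have hcosπ : Real.cos π ≠ 0 := by rw [Real.cos_pi]; norm_num
    have hcont : ContinuousAt Real.tan π := Real.continuousAt_tan.2 hcosπ
    have hmul : Tendsto (fun t : ℝ => t * K) (𝓝[<] q) (𝓝 π) := by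
      have : Continuous (fun t : ℝ => t * K) := by continuity
      have h := (this.tendsto q).mono_left (nhdsWithin_le_nhds (s := Iio q))
      rwa [show q * (K : ℝ) = π by rw [hq_def]; field_simp] at h
    have := hcont.tendsto.comp hmul
    rwa [Real.tan_pi] at this
  have hIoo_q : Ioo p q ∈ 𝓝[<] q := Ioo_mem_nhdsLT_of_mem ⟨hpq, le_rfl⟩
  have hbpos : ∀ᶠ t in 𝓝[<] q, 0 < f t := by
    have hev : ∀ᶠ t in 𝓝[<] q, -(c * Real.tan p) < Real.tan (t * K) := by
      have : Iio (Real.tan (q*K)) ∈ 𝓝 (0:ℝ) → True := fun _ => trivial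
      exact hmapQ.eventually (eventually_gt_nhds (by nlinarith))
    filter_upwards [hev, hIoo_q] with t ht htI
    have htlt : t < π / 2 := lt_of_lt_of_le htI.2 hqle
    have htp : Real.tan p < Real.tan t := by
      apply Real.strictMonoOn_tan ⟨by linarith, by linarith⟩ ⟨by linarith [htI.1, hppos], htlt⟩
      exact htI.1
    have : c * Real.tan p < c * Real.tan t := by nlinarith
    rw [hf_def]
    dsimp only
    linarith
  obtain ⟨b, hbpos', hbI⟩ := (hbpos.and (eventually_of_mem hIoo_q fun t ht => ht)).exists
  -- continuity of f on Ioo p q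
  have hfc : ContinuousOn f (Ioo p q) := by
    intro t ht
    have htlt : t < π / 2 := lt_of_lt_of_le ht.2 hqle
    have h1 : ContinuousAt (fun t : ℝ => Real.tan (t * K)) t := by
      have hcos : Real.cos (t * K) ≠ 0 := by
        have h1 : π / 2 < t * K := by
          calc π / 2 = p * K := by rw [hp_def]; field_simp
            _ < t * K := mul_lt_mul_of_pos_right ht.1 hKpos
        have h2 : t * K < π := by
          calc t * K < q * K := mul_lt_mul_of_pos_right ht.2 hKpos
            _ = π := by rw [hq_def]; field_simp
        have := Real.cos_neg_of_pi_div_two_lt_of_lt h1 (by linarith)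
        linarith
      have hcm : ContinuousAt (fun s : ℝ => s * (K : ℝ)) t :=
        (continuous_mul_right _).continuousAt
      show ContinuousAt (Real.tan ∘ fun s : ℝ => s * (K : ℝ)) t
      exact ContinuousAt.comp (Real.continuousAt_tan.2 hcos) hcm
    have h2 : ContinuousAt (fun t : ℝ => c * Real.tan t) t := by
      apply ContinuousAt.mul continuousAt_const
      apply Real.continuousAt_tan.2
      have : 0 < Real.cos t := Real.cos_pos_of_mem_Ioo ⟨by linarith [ht.1, hppos], htlt⟩
      linarith
    exact (h1.add h2).continuousWithinAt
  -- IVT to find root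
  have hroot' : ∃ x ∈ Ioo p q, f x = 0 := by
    rcases le_total a b with hab | hab
    · have hsub : Icc a b ⊆ Ioo p q := fun x hx => ⟨lt_of_lt_of_le haI.1 hx.1, lt_of_le_of_lt hx.2 hbI.2⟩
      have := intermediate_value_Icc hab (hfc.mono hsub)
      obtain ⟨x, hxI, hx0⟩ := this ⟨le_of_lt haneg, le_of_lt hbpos'⟩
      exact ⟨x, hsub hxI, hx0⟩
    · have hsub : Icc b a ⊆ Ioo p q := fun x hx => ⟨lt_of_lt_of_le hbI.1 hx.1, lt_of_le_of_lt hx.2 haI.2⟩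
      have := intermediate_value_Icc' hab (hfc.mono hsub)
      obtain ⟨x, hxI, hx0⟩ := this ⟨le_of_lt haneg, le_of_lt hbpos'⟩
      exact ⟨x, hsub hxI, hx0⟩
  obtain ⟨x, hxI, hx0⟩ := hroot'
  have hxroot : Real.tan (x * K) = -c * Real.tan x := by
    rw [hf_def] at hx0; dsimp only at hx0; linarith
  have := hmin x (lt_trans hppos hxI.1) hxroot
  exact lt_of_le_of_lt this hxI.2
end

section
/- Let T be a finite graph in which every vertex has degree at most d and every vertex is at distance at most K−1 from a fixed root r, and suppose all levels are nonempty. Assign to each vertex at distance j from r the value v_{j+1}, where v is a positive decreasing sequence satisfying λv_1 = d(v_1 − v_2), λv_j = dv_j − v_{j−1} − (d−1)v_{j+1} (2 ≤ j ≤ K−1), λv_K = dv_K − v_{K−1} with λ = d − 2√(d−1)cos θ. Then the Rayleigh quotient R = (∑_{j=1}^{K−1} e_j(v_j − v_{j+1})² + e_K v_K²) / (∑_{j=1}^K n_j v_j²) satisfies R ≤ λ, where n_j is the number of vertices at distance j−1 from r, e_j the number of edges between levels j and j+1, and e_K = d·n_K − e_{K−1}. -/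
open Finset BigOperators

private lemma rlb_nadd1 (a : ℕ) : a + 1 + 1 = a + 2 := rfl
private lemma rlb_nadd2 (a : ℕ) : a + 1 + 2 = a + 3 := rfl
private lemma rlb_nadd3 (a : ℕ) : a + 2 + 1 = a + 3 := rfl

private lemma rlb_peel2 {M : Type*} [AddCommMonoid M] (f : ℕ → M) (m : ℕ) :
    ∑ j ∈ range (m + 2), f j = f 0 + (∑ j ∈ range m, f (j + 1)) + f (m + 1) := by
  rw [Finset.sum_range_succ, Finset.sum_range_succ']
  abel

private lemma rlb_peel1 {M : Type*} [AddCommMonoid M] (f : ℕ → M) (m : ℕ) :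
    ∑ j ∈ range (m + 1), f j = f 0 + ∑ j ∈ range m, f (j + 1) :=
  (Finset.sum_range_succ' f m).trans (add_comm _ _)

section Comb

variable {V : Type*} [Fintype V] [DecidableEq V]
    (G : SimpleGraph V) [DecidableRel G.Adj] (r : V) (d : ℕ)

private lemma rlb_pc1 (t : ℕ) :
    (univ.filter fun p : V × V =>
        G.Adj p.1 p.2 ∧ G.dist r p.1 = t ∧ G.dist r p.2 = t + 1).card
      = ∑ a : V, (univ.filter fun b =>
          G.Adj a b ∧ G.dist r a = t ∧ G.dist r b = t + 1).card := by
  rw [Finset.card_filter, Fintype.sum_prod_type]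
  exact Finset.sum_congr rfl fun a _ => (Finset.card_filter _ _).symm

private lemma rlb_pc2 (t : ℕ) :
    (univ.filter fun p : V × V =>
        G.Adj p.1 p.2 ∧ G.dist r p.1 = t ∧ G.dist r p.2 = t + 1).card
      = ∑ b : V, (univ.filter fun a =>
          G.Adj a b ∧ G.dist r a = t ∧ G.dist r b = t + 1).card := by
  rw [Finset.card_filter, Fintype.sum_prod_type, Finset.sum_comm]
  exact Finset.sum_congr rfl fun b _ => (Finset.card_filter _ _).symm

private lemma rlb_lemE (hdeg : ∀ u, G.degree u ≤ d) (t : ℕ) :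
    (univ.filter fun p : V × V =>
        G.Adj p.1 p.2 ∧ G.dist r p.1 = t ∧ G.dist r p.2 = t + 1).card
      ≤ d * (univ.filter fun u => G.dist r u = t).card := by
  rw [rlb_pc1]
  calc ∑ a : V, (univ.filter fun b =>
          G.Adj a b ∧ G.dist r a = t ∧ G.dist r b = t + 1).card
      ≤ ∑ a : V, (if G.dist r a = t then d else 0) := by
        refine Finset.sum_le_sum fun a _ => ?_
        by_cases h : G.dist r a = t
        · rw [if_pos h]
          refine le_trans (Finset.card_le_card fun b hb => ?_) (le_trans
            (le_of_eq (G.card_neighborFinset_eq_degree a)) (hdeg a))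
          simp only [mem_filter, mem_univ, true_and] at hb
          exact (G.mem_neighborFinset a b).2 hb.1
        · rw [if_neg h]
          simp only [Nat.le_zero, Finset.card_eq_zero, Finset.filter_eq_empty_iff]
          exact fun b _ => by tauto
    _ = d * (univ.filter fun u => G.dist r u = t).card := by
        rw [← Finset.sum_filter, Finset.sum_const, smul_eq_mul, mul_comm]

private lemma rlb_lemA (hdeg : ∀ u, G.degree u ≤ d) (t : ℕ) :
    (univ.filter fun p : V × V =>
        G.Adj p.1 p.2 ∧ G.dist r p.1 = t + 1 ∧ G.dist r p.2 = t + 2).card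
    + (univ.filter fun p : V × V =>
        G.Adj p.1 p.2 ∧ G.dist r p.1 = t ∧ G.dist r p.2 = t + 1).card
      ≤ d * (univ.filter fun u => G.dist r u = t + 1).card := by
  rw [rlb_pc1 G r (t + 1), rlb_pc2 G r t, ← Finset.sum_add_distrib]
  calc ∑ a : V, ((univ.filter fun b =>
          G.Adj a b ∧ G.dist r a = t + 1 ∧ G.dist r b = t + 1 + 1).card
        + (univ.filter fun x =>
          G.Adj x a ∧ G.dist r x = t ∧ G.dist r a = t + 1).card)
      ≤ ∑ a : V, (if G.dist r a = t + 1 then d else 0) := by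
        refine Finset.sum_le_sum fun a _ => ?_
        by_cases h : G.dist r a = t + 1
        · rw [if_pos h]
          have hsub1 : (univ.filter fun b =>
              G.Adj a b ∧ G.dist r a = t + 1 ∧ G.dist r b = t + 1 + 1)
              ⊆ G.neighborFinset a := fun b hb => by
            simp only [mem_filter, mem_univ, true_and] at hb
            exact (G.mem_neighborFinset a b).2 hb.1
          have hsub2 : (univ.filter fun x =>
              G.Adj x a ∧ G.dist r x = t ∧ G.dist r a = t + 1)
              ⊆ G.neighborFinset a := fun x hx => by
            simp only [mem_filter, mem_univ, true_and] at hx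
            exact (G.mem_neighborFinset a x).2 hx.1.symm
          have hdisj : Disjoint
              (univ.filter fun b =>
                G.Adj a b ∧ G.dist r a = t + 1 ∧ G.dist r b = t + 1 + 1)
              (univ.filter fun x =>
                G.Adj x a ∧ G.dist r x = t ∧ G.dist r a = t + 1) := by
            refine Finset.disjoint_left.2 fun x hx1 hx2 => ?_
            simp only [mem_filter, mem_univ, true_and] at hx1 hx2
            omega
          calc _ = ((univ.filter fun b =>
                G.Adj a b ∧ G.dist r a = t + 1 ∧ G.dist r b = t + 1 + 1)
              ∪ (univ.filter fun x =>
                G.Adj x a ∧ G.dist r x = t ∧ G.dist r a = t + 1)).card :=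
              (Finset.card_union_of_disjoint hdisj).symm
            _ ≤ (G.neighborFinset a).card :=
              Finset.card_le_card (Finset.union_subset hsub1 hsub2)
            _ ≤ d := le_trans (le_of_eq (G.card_neighborFinset_eq_degree a)) (hdeg a)
        · rw [if_neg h]
          have h1 : (univ.filter fun b =>
              G.Adj a b ∧ G.dist r a = t + 1 ∧ G.dist r b = t + 1 + 1).card = 0 := by
            simp only [Finset.card_eq_zero, Finset.filter_eq_empty_iff]
            exact fun b _ => by tauto
          have h2 : (univ.filter fun x =>
              G.Adj x a ∧ G.dist r x = t ∧ G.dist r a = t + 1).card = 0 := by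
            simp only [Finset.card_eq_zero, Finset.filter_eq_empty_iff]
            exact fun x _ => by tauto
          omega
    _ = d * (univ.filter fun u => G.dist r u = t + 1).card := by
        rw [← Finset.sum_filter, Finset.sum_const, smul_eq_mul, mul_comm]

private lemma rlb_predex (hre : ∀ u, G.Reachable r u) (t : ℕ) (u : V)
    (hu : G.dist r u = t + 1) : ∃ a, G.Adj a u ∧ G.dist r a = t := by
  obtain ⟨p, hp⟩ := (hre u).exists_walk_length_eq_dist
  have hnil : ¬ p.reverse.Nil := by
    rw [SimpleGraph.Walk.not_nil_iff_lt_length, SimpleGraph.Walk.length_reverse, hp, hu]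
    omega
  obtain ⟨b, hadj, q, hq⟩ := SimpleGraph.Walk.not_nil_iff.mp hnil
  have hlen : q.length = t := by
    have h := congrArg SimpleGraph.Walk.length hq
    rw [SimpleGraph.Walk.length_reverse, hp, hu, SimpleGraph.Walk.length_cons] at h
    omega
  refine ⟨b, hadj.symm, ?_⟩
  have h1 : G.dist r b ≤ t := by
    have h := SimpleGraph.dist_le q.reverse
    rwa [SimpleGraph.Walk.length_reverse, hlen] at h
  have h2 : G.dist r u ≤ G.dist r b + 1 := by
    obtain ⟨p2, hp2⟩ := (hre b).exists_walk_length_eq_dist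
    have h := SimpleGraph.dist_le (p2.concat hadj.symm)
    rwa [SimpleGraph.Walk.length_concat, hp2] at h
  omega

private lemma rlb_lemB (hre : ∀ u, G.Reachable r u) (t : ℕ) :
    (univ.filter fun u => G.dist r u = t + 1).card
      ≤ (univ.filter fun p : V × V =>
        G.Adj p.1 p.2 ∧ G.dist r p.1 = t ∧ G.dist r p.2 = t + 1).card := by
  classical
  refine Finset.card_le_card_of_injOn
    (fun u => (if h : ∃ a, G.Adj a u ∧ G.dist r a = t then h.choose else u, u))
    (fun u hu => ?_) (fun u _ w _ h => congrArg Prod.snd h)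
  simp only [Finset.mem_coe, mem_filter, mem_univ, true_and] at hu
  have hex := rlb_predex G r hre t u hu
  dsimp only
  rw [dif_pos hex]
  simp only [Finset.mem_coe, mem_filter, mem_univ, true_and]
  exact ⟨hex.choose_spec.1, hex.choose_spec.2, hu⟩

end Comb

/-- Nilli/Friedman-type level-comparison bound: in a finite graph of maximum degree at most
`d` in which every vertex is within distance `K - 1` of a root `r` and all levels are
nonempty, assigning the value `v j` to the vertices at distance `j - 1` from `r`, where `v`
is a positive decreasing solution of the Bethe-tree recurrence with
`lam = d - 2√(d-1)·cos θ`, gives a Rayleigh quotient at most `lam`. -/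
theorem rayleigh_level_bound {V : Type*} [Fintype V] [DecidableEq V]
    (G : SimpleGraph V) [DecidableRel G.Adj] (r : V) (d K : ℕ) (hd : 3 ≤ d) (hK : 2 ≤ K)
    (hdeg : ∀ u, G.degree u ≤ d)
    (hecc : ∀ u, G.Reachable r u ∧ G.dist r u ≤ K - 1)
    (hlevels : ∀ j < K, ∃ u, G.dist r u = j)
    (nLvl : ℕ → ℕ) (eLvl : ℕ → ℕ)
    (hn : ∀ j, nLvl j = (univ.filter fun u => G.dist r u = j).card)
    (he : ∀ j, eLvl j =
      (univ.filter fun p : V × V =>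
        G.Adj p.1 p.2 ∧ G.dist r p.1 = j ∧ G.dist r p.2 = j + 1).card)
    (θ lam : ℝ) (hlam : lam = (d : ℝ) - 2 * Real.sqrt ((d : ℝ) - 1) * Real.cos θ)
    (v : ℕ → ℝ) (hpos : ∀ j, 1 ≤ j → j ≤ K → 0 < v j)
    (hdec : ∀ j, 1 ≤ j → j < K → v (j + 1) ≤ v j)
    (hrec1 : lam * v 1 = d * (v 1 - v 2))
    (hrec : ∀ j, 2 ≤ j → j ≤ K - 1 →
      lam * v j = d * v j - v (j - 1) - ((d : ℝ) - 1) * v (j + 1))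
    (hrecK : lam * v K = d * v K - v (K - 1)) :
    (∑ j ∈ range (K - 1), (eLvl j : ℝ) * (v (j + 1) - v (j + 2)) ^ 2
        + ((d * nLvl (K - 1) : ℝ) - (eLvl (K - 2) : ℝ)) * v K ^ 2)
      / (∑ j ∈ range K, (nLvl j : ℝ) * v (j + 1) ^ 2) ≤ lam := by
  obtain ⟨m, rfl⟩ : ∃ m, K = m + 2 := ⟨K - 2, by omega⟩
  have hre : ∀ u, G.Reachable r u := fun u => (hecc u).1
  -- cast combinatorial facts to ℝ
  have hA0 : (eLvl 0 : ℝ) ≤ (d : ℝ) * (nLvl 0 : ℝ) := by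
    have h : eLvl 0 ≤ d * nLvl 0 := by
      rw [he, hn]; exact rlb_lemE G r d hdeg 0
    exact_mod_cast h
  have hA : ∀ t, (eLvl (t + 1) : ℝ) + (eLvl t : ℝ) ≤ (d : ℝ) * (nLvl (t + 1) : ℝ) := by
    intro t
    have h : eLvl (t + 1) + eLvl t ≤ d * nLvl (t + 1) := by
      rw [he, he, hn]; exact rlb_lemA G r d hdeg t
    exact_mod_cast h
  have hB : ∀ t, (nLvl (t + 1) : ℝ) ≤ (eLvl t : ℝ) := by
    intro t
    have h : nLvl (t + 1) ≤ eLvl t := by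
      rw [he, hn]; exact rlb_lemB G r hre t
    exact_mod_cast h
  have hn0 : (1 : ℝ) ≤ (nLvl 0 : ℝ) := by
    have h : 1 ≤ nLvl 0 := by
      rw [hn]
      exact Finset.card_pos.2
        ⟨r, Finset.mem_filter.2 ⟨Finset.mem_univ r, SimpleGraph.dist_self⟩⟩
    exact_mod_cast h
  have hv1 : 0 < v 1 := hpos 1 (by omega) (by omega)
  have hv2 : 0 < v 2 := hpos 2 (by omega) (by omega)
  have hDpos : 0 < ∑ j ∈ range (m + 2), (nLvl j : ℝ) * v (j + 1) ^ 2 := by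
    apply Finset.sum_pos'
    · intro i _
      positivity
    · exact ⟨0, Finset.mem_range.2 (by omega), by nlinarith⟩
  -- the middle recurrence, per index
  have hmid : ∀ j ∈ range m,
      lam * ((nLvl (j + 1) : ℝ) * v (j + 2) ^ 2)
        = (((d : ℝ) - 1) * (nLvl (j + 1) : ℝ) * (v (j + 2) - v (j + 3)) ^ 2
            + (((d : ℝ) - 1) * (nLvl (j + 1) : ℝ) - (nLvl (j + 2) : ℝ)) * v (j + 3)
              * (v (j + 2) - v (j + 3)))
          + ((nLvl (j + 2) : ℝ) * v (j + 3) * (v (j + 2) - v (j + 3))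
            - (nLvl (j + 1) : ℝ) * v (j + 2) * (v (j + 1) - v (j + 2))) := by
    intro j hj
    have hj' := Finset.mem_range.1 hj
    have hr := hrec (j + 2) (by omega) (by omega)
    rw [show j + 2 - 1 = j + 1 from rfl, show j + 2 + 1 = j + 3 from rfl] at hr
    have e1 : lam * ((nLvl (j + 1) : ℝ) * v (j + 2) ^ 2)
        = (nLvl (j + 1) : ℝ) * v (j + 2) * (lam * v (j + 2)) := by ring
    rw [e1, hr]; ring
  -- the key identity
  have key : lam * (∑ j ∈ range (m + 2), (nLvl j : ℝ) * v (j + 1) ^ 2)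
      = ((d : ℝ) * (nLvl 0 : ℝ) * (v 1 - v 2) ^ 2
          + ((d : ℝ) * (nLvl 0 : ℝ) - (nLvl 1 : ℝ)) * v 2 * (v 1 - v 2))
        + (∑ j ∈ range m, (((d : ℝ) - 1) * (nLvl (j + 1) : ℝ) * (v (j + 2) - v (j + 3)) ^ 2
            + (((d : ℝ) - 1) * (nLvl (j + 1) : ℝ) - (nLvl (j + 2) : ℝ)) * v (j + 3)
              * (v (j + 2) - v (j + 3))))
        + ((d : ℝ) - 1) * (nLvl (m + 1) : ℝ) * v (m + 2) ^ 2 := by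
    have hg := Finset.sum_range_sub
      (fun j => (nLvl (j + 1) : ℝ) * v (j + 2) * (v (j + 1) - v (j + 2))) m
    simp only [rlb_nadd1, rlb_nadd2, rlb_nadd3, zero_add] at hg
    rw [Finset.mul_sum, rlb_peel2 (fun j => lam * ((nLvl j : ℝ) * v (j + 1) ^ 2)) m]
    simp only [rlb_nadd1, rlb_nadd2, rlb_nadd3, zero_add]
    rw [Finset.sum_congr rfl hmid, Finset.sum_add_distrib, hg]
    have hrK := hrecK
    rw [show m + 2 - 1 = m + 1 from rfl] at hrK
    have h0 : lam * ((nLvl 0 : ℝ) * v 1 ^ 2) = (nLvl 0 : ℝ) * v 1 * (lam * v 1) := by ring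
    have hKK : lam * ((nLvl (m + 1) : ℝ) * v (m + 2) ^ 2)
        = (nLvl (m + 1) : ℝ) * v (m + 2) * (lam * v (m + 2)) := by ring
    rw [h0, hrec1, hKK, hrK]
    ring
  -- reduce goal
  simp only [show m + 2 - 1 = m + 1 from rfl, show m + 2 - 2 = m from rfl]
  rw [div_le_iff₀ hDpos]
  push_cast
  rw [key, rlb_peel1 (fun j => (eLvl j : ℝ) * (v (j + 1) - v (j + 2)) ^ 2) m]
  simp only [rlb_nadd1, rlb_nadd2, rlb_nadd3, zero_add]
  have hbound0 : (eLvl 0 : ℝ) * (v 1 - v 2) ^ 2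
      ≤ (d : ℝ) * (nLvl 0 : ℝ) * (v 1 - v 2) ^ 2
        + ((d : ℝ) * (nLvl 0 : ℝ) - (nLvl 1 : ℝ)) * v 2 * (v 1 - v 2) := by
    have h1 : (eLvl 0 : ℝ) * (v 1 - v 2) ^ 2 ≤ (d : ℝ) * (nLvl 0 : ℝ) * (v 1 - v 2) ^ 2 :=
      mul_le_mul_of_nonneg_right hA0 (sq_nonneg _)
    have h2 : (0 : ℝ) ≤ ((d : ℝ) * (nLvl 0 : ℝ) - (nLvl 1 : ℝ)) * v 2 * (v 1 - v 2) := by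
      have hu0 : 0 ≤ v 1 - v 2 := sub_nonneg.2 (hdec 1 (by omega) (by omega))
      have := hB 0
      apply mul_nonneg (mul_nonneg (by linarith) hv2.le) hu0
    linarith
  have hboundm : ∀ j ∈ range m,
      (eLvl (j + 1) : ℝ) * (v (j + 2) - v (j + 3)) ^ 2
        ≤ ((d : ℝ) - 1) * (nLvl (j + 1) : ℝ) * (v (j + 2) - v (j + 3)) ^ 2
          + (((d : ℝ) - 1) * (nLvl (j + 1) : ℝ) - (nLvl (j + 2) : ℝ)) * v (j + 3)
            * (v (j + 2) - v (j + 3)) := by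
    intro j hj
    have hj' := Finset.mem_range.1 hj
    have hAj := hA j
    have hBj := hB j
    have hBj1 := hB (j + 1)
    have h1 : (eLvl (j + 1) : ℝ) * (v (j + 2) - v (j + 3)) ^ 2
        ≤ ((d : ℝ) - 1) * (nLvl (j + 1) : ℝ) * (v (j + 2) - v (j + 3)) ^ 2 :=
      mul_le_mul_of_nonneg_right (by linarith) (sq_nonneg _)
    have h2 : (0 : ℝ) ≤ (((d : ℝ) - 1) * (nLvl (j + 1) : ℝ) - (nLvl (j + 2) : ℝ)) * v (j + 3)
        * (v (j + 2) - v (j + 3)) := by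
      have hu : 0 ≤ v (j + 2) - v (j + 3) := sub_nonneg.2 (hdec (j + 2) (by omega) (by omega))
      have hv3 : 0 < v (j + 3) := hpos (j + 3) (by omega) (by omega)
      apply mul_nonneg (mul_nonneg (by linarith) hv3.le) hu
    linarith
  have hboundK : ((d : ℝ) * (nLvl (m + 1) : ℝ) - (eLvl m : ℝ)) * v (m + 2) ^ 2
      ≤ ((d : ℝ) - 1) * (nLvl (m + 1) : ℝ) * v (m + 2) ^ 2 := by
    have := hB m
    exact mul_le_mul_of_nonneg_right (by linarith) (sq_nonneg _)
  exact add_le_add (add_le_add hbound0 (Finset.sum_le_sum hboundm)) hboundK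
end
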